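/- For every k ∈ ℕ with k ≥ 1, the strict inequality Σ_{j=1}^{k} 1/(2j−1) < (ln k + ln 4 + γ + 1/(23k²))/2 holds, where γ is the Euler–Mascheroni constant. -/

import Mathlib

open Real
open Set Filter


lemma log_taylor_lb (x : ℝ) (hx : 0 ≤ x) :
    x - x^2/2 + x^3/3 - x^4/4 + x^5/5 - x^6/6 + x^7/7 - x^8/8 ≤ Real.log (1+x) := by
  set f : ℝ → ℝ := fun y => Real.log (1+y) - (y - y^2/2 + y^3/3 - y^4/4 + y^5/5 - y^6/6 + y^7/7 - y^8/8) with hf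
  have hd : ∀ y : ℝ, 0 < 1 + y → HasDerivAt f (y^8/(1+y)) y := by
    intro y hy
    have h1 : HasDerivAt (fun y : ℝ => Real.log (1+y)) (1/(1+y)) y := by
      have := (Real.hasDerivAt_log (ne_of_gt hy)).comp y ((hasDerivAt_id y).const_add 1)
      simpa [one_div, Function.comp_def] using this
    have h2 : HasDerivAt (fun y : ℝ => y - y^2/2 + y^3/3 - y^4/4 + y^5/5 - y^6/6 + y^7/7 - y^8/8)
        (1 - y + y^2 - y^3 + y^4 - y^5 + y^6 - y^7) y := by
      have h := ((((((((hasDerivAt_id y).sub ((hasDerivAt_pow 2 y).div_const 2)).add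
        ((hasDerivAt_pow 3 y).div_const 3)).sub ((hasDerivAt_pow 4 y).div_const 4)).add
        ((hasDerivAt_pow 5 y).div_const 5)).sub ((hasDerivAt_pow 6 y).div_const 6)).add
        ((hasDerivAt_pow 7 y).div_const 7)).sub ((hasDerivAt_pow 8 y).div_const 8))
      refine h.congr_deriv ?_
      push_cast
      ring
    have h := h1.sub h2
    refine h.congr_deriv ?_
    field_simp [ne_of_gt hy]
    ring
  have mono : MonotoneOn f (Ici (0:ℝ)) := by
    apply monotoneOn_of_deriv_nonneg (convex_Ici 0)
    · intro y hy
      exact ((hd y (by simp at hy; linarith)).differentiableAt).continuousAt.continuousWithinAt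
    · intro y hy
      rw [interior_Ici] at hy
      exact ((hd y (by simp at hy; linarith)).differentiableAt).differentiableWithinAt
    · intro y hy
      rw [interior_Ici] at hy
      simp only [mem_Ioi] at hy
      rw [(hd y (by linarith)).deriv]
      positivity
  have h0 : f 0 ≤ f x := mono (self_mem_Ici) hx hx
  simp only [hf] at h0
  norm_num at h0
  linarith

lemma log_taylor_ub (x : ℝ) (hx : 0 ≤ x) :
    Real.log (1+x) ≤ x - x^2/2 + x^3/3 - x^4/4 + x^5/5 - x^6/6 + x^7/7 - x^8/8 + x^9/9 - x^10/10 + x^11/11 := by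
  set f : ℝ → ℝ := fun y => (y - y^2/2 + y^3/3 - y^4/4 + y^5/5 - y^6/6 + y^7/7 - y^8/8 + y^9/9 - y^10/10 + y^11/11) - Real.log (1+y) with hf
  have hd : ∀ y : ℝ, 0 < 1 + y → HasDerivAt f (y^11/(1+y)) y := by
    intro y hy
    have h1 : HasDerivAt (fun y : ℝ => Real.log (1+y)) (1/(1+y)) y := by
      have := (Real.hasDerivAt_log (ne_of_gt hy)).comp y ((hasDerivAt_id y).const_add 1)
      simpa [one_div, Function.comp_def] using this
    have h2 : HasDerivAt (fun y : ℝ => y - y^2/2 + y^3/3 - y^4/4 + y^5/5 - y^6/6 + y^7/7 - y^8/8 + y^9/9 - y^10/10 + y^11/11)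
        (1 - y + y^2 - y^3 + y^4 - y^5 + y^6 - y^7 + y^8 - y^9 + y^10) y := by
      have h := (((((((((((hasDerivAt_id y).sub ((hasDerivAt_pow 2 y).div_const 2)).add
        ((hasDerivAt_pow 3 y).div_const 3)).sub ((hasDerivAt_pow 4 y).div_const 4)).add
        ((hasDerivAt_pow 5 y).div_const 5)).sub ((hasDerivAt_pow 6 y).div_const 6)).add
        ((hasDerivAt_pow 7 y).div_const 7)).sub ((hasDerivAt_pow 8 y).div_const 8)).add
        ((hasDerivAt_pow 9 y).div_const 9)).sub ((hasDerivAt_pow 10 y).div_const 10)).add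
        ((hasDerivAt_pow 11 y).div_const 11))
      refine h.congr_deriv ?_
      push_cast
      ring
    have h := h2.sub h1
    refine h.congr_deriv ?_
    field_simp [ne_of_gt hy]
    ring
  have mono : MonotoneOn f (Ici (0:ℝ)) := by
    apply monotoneOn_of_deriv_nonneg (convex_Ici 0)
    · intro y hy
      exact ((hd y (by simp at hy; linarith)).differentiableAt).continuousAt.continuousWithinAt
    · intro y hy
      rw [interior_Ici] at hy
      exact ((hd y (by simp at hy; linarith)).differentiableAt).differentiableWithinAt
    · intro y hy
      rw [interior_Ici] at hy
      simp only [mem_Ioi] at hy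
      rw [(hd y (by linarith)).deriv]
      positivity
  have h0 : f 0 ≤ f x := mono (self_mem_Ici) hx hx
  simp only [hf] at h0
  norm_num at h0
  linarith


lemma keyA (m : ℝ) (hm : 2 ≤ m) :
    1/(m+1) + 1/(2*m*(m+1)) - (2*m+1)/(12*m^2*(m+1)^2)
      < 1/m - 1/(2*m^2) + 1/(3*m^3) - 1/(4*m^4) + 1/(5*m^5) - 1/(6*m^6) + 1/(7*m^7) - 1/(8*m^8) := by
  have h0 : (0:ℝ) < m := by linarith
  have h1 : (0:ℝ) < m + 1 := by linarith
  rw [← sub_pos]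
  have key : (1/m - 1/(2*m^2) + 1/(3*m^3) - 1/(4*m^4) + 1/(5*m^5) - 1/(6*m^6) + 1/(7*m^7) - 1/(8*m^8))
      - (1/(m+1) + 1/(2*m*(m+1)) - (2*m+1)/(12*m^2*(m+1)^2))
      = (28*m^5 - 14*m^4 + 8*m^3 - 5*m^2 - 90*m - 105) / (840 * m^8 * (m+1)^2) := by
    field_simp
    ring
  rw [key]
  apply div_pos _ (by positivity)
  nlinarith [pow_nonneg (by linarith : (0:ℝ) ≤ m - 2) 2, pow_nonneg (by linarith : (0:ℝ) ≤ m - 2) 3,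
    pow_nonneg (by linarith : (0:ℝ) ≤ m - 2) 4, pow_nonneg (by linarith : (0:ℝ) ≤ m - 2) 5]

lemma keyB (m : ℝ) (hm : 2 ≤ m) :
    1/m - 1/(2*m^2) + 1/(3*m^3) - 1/(4*m^4) + 1/(5*m^5) - 1/(6*m^6) + 1/(7*m^7) - 1/(8*m^8) + 1/(9*m^9) - 1/(10*m^10) + 1/(11*m^11)
      < 1/(m+1) + 1/(2*m*(m+1)) - (2*m+1)/(12*m^2*(m+1)^2) + 1/(120*m^4) - 1/(120*(m+1)^4) := by
  have h0 : (0:ℝ) < m := by linarith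
  have h1 : (0:ℝ) < m + 1 := by linarith
  rw [← sub_pos]
  have key : (1/(m+1) + 1/(2*m*(m+1)) - (2*m+1)/(12*m^2*(m+1)^2) + 1/(120*m^4) - 1/(120*(m+1)^4))
      - (1/m - 1/(2*m^2) + 1/(3*m^3) - 1/(4*m^4) + 1/(5*m^5) - 1/(6*m^6) + 1/(7*m^7) - 1/(8*m^8) + 1/(9*m^9) - 1/(10*m^10) + 1/(11*m^11))
      = (660*m^8 + 330*m^7 - 44*m^6 + 22*m^5 - 12*m^4 - 2303*m^3 - 7112*m^2 - 7308*m - 2520) / (27720 * m^11 * (m+1)^4) := by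
    field_simp
    ring
  rw [key]
  apply div_pos _ (by positivity)
  nlinarith [pow_nonneg (by linarith : (0:ℝ) ≤ m - 2) 2, pow_nonneg (by linarith : (0:ℝ) ≤ m - 2) 3,
    pow_nonneg (by linarith : (0:ℝ) ≤ m - 2) 4, pow_nonneg (by linarith : (0:ℝ) ≤ m - 2) 5,
    pow_nonneg (by linarith : (0:ℝ) ≤ m - 2) 6, pow_nonneg (by linarith : (0:ℝ) ≤ m - 2) 7,
    pow_nonneg (by linarith : (0:ℝ) ≤ m - 2) 8]


open Real Filter

noncomputable def aseq (n : ℕ) : ℝ := (harmonic n : ℝ) - Real.log n - 1/(2*n) + 1/(12*n^2)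
noncomputable def bseq (n : ℕ) : ℝ := aseq n - 1/(120*n^4)

lemma harmonic_cast_succ (n : ℕ) : (harmonic (n+1) : ℝ) = (harmonic n : ℝ) + 1/((n:ℝ)+1) := by
  push_cast [harmonic_succ]
  ring

lemma log_succ_sub (n : ℕ) (hn : 1 ≤ n) :
    Real.log (n+1) - Real.log n = Real.log (1 + 1/(n:ℝ)) := by
  have h0 : (0:ℝ) < n := by exact_mod_cast hn
  rw [← Real.log_div (by linarith) (ne_of_gt h0)]
  congr 1
  field_simp

lemma aseq_tendsto : Tendsto aseq atTop (nhds Real.eulerMascheroniConstant) := by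
  have h1 : Tendsto (fun n : ℕ => 1/(2*(n:ℝ))) atTop (nhds 0) := by
    apply Tendsto.div_atTop (tendsto_const_nhds)
    exact (tendsto_natCast_atTop_atTop).const_mul_atTop (by norm_num)
  have h2 : Tendsto (fun n : ℕ => 1/(12*(n:ℝ)^2)) atTop (nhds 0) := by
    apply Tendsto.div_atTop (tendsto_const_nhds)
    exact ((tendsto_pow_atTop (by norm_num : 2 ≠ 0)).comp tendsto_natCast_atTop_atTop).const_mul_atTop (by norm_num)
  have h := (Real.tendsto_harmonic_sub_log.sub h1).add h2
  rw [sub_zero, add_zero] at h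
  exact h.congr (fun n => by simp only [aseq])

lemma bseq_tendsto : Tendsto bseq atTop (nhds Real.eulerMascheroniConstant) := by
  have h3 : Tendsto (fun n : ℕ => 1/(120*(n:ℝ)^4)) atTop (nhds 0) := by
    apply Tendsto.div_atTop (tendsto_const_nhds)
    exact ((tendsto_pow_atTop (by norm_num : 4 ≠ 0)).comp tendsto_natCast_atTop_atTop).const_mul_atTop (by norm_num)
  have h := aseq_tendsto.sub h3
  rw [sub_zero] at h
  exact h.congr (fun n => by simp only [bseq])

lemma aseq_succ_lt (n : ℕ) (hn : 1 ≤ n) : aseq (n+1) < aseq n := by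
  rcases eq_or_lt_of_le hn with h1 | h2
  · -- n = 1
    have e1 : (harmonic 1 : ℝ) = 1 := by norm_num [harmonic_succ]
    have e2 : (harmonic 2 : ℝ) = 3/2 := by norm_num [harmonic_succ]
    subst h1
    simp only [aseq]
    norm_num [e1, e2, Real.log_one]
    nlinarith [Real.log_two_gt_d9]
  · have hn2 : 2 ≤ n := h2
    set m : ℝ := (n : ℝ) with hmdef
    have hm : (2:ℝ) ≤ m := by rw [hmdef]; exact_mod_cast hn2
    have h0 : (0:ℝ) < m := by linarith
    have h1 : (0:ℝ) < m + 1 := by linarith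
    have hlog : Real.log ((n:ℝ)+1) = Real.log m + Real.log (1 + 1/m) := by
      have := log_succ_sub n (by omega)
      push_cast at this
      linarith
    have hP : 1/m - 1/(2*m^2) + 1/(3*m^3) - 1/(4*m^4) + 1/(5*m^5) - 1/(6*m^6) + 1/(7*m^7) - 1/(8*m^8)
        ≤ Real.log (1 + 1/m) := by
      have h := log_taylor_lb (1/m) (by positivity)
      have e : 1/m - 1/(2*m^2) + 1/(3*m^3) - 1/(4*m^4) + 1/(5*m^5) - 1/(6*m^6) + 1/(7*m^7) - 1/(8*m^8)
          = (1/m) - (1/m)^2/2 + (1/m)^3/3 - (1/m)^4/4 + (1/m)^5/5 - (1/m)^6/6 + (1/m)^7/7 - (1/m)^8/8 := by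
        ring
      rw [e]; exact h
    have eA : 1/(2*m) - 1/(2*(m+1)) = 1/(2*m*(m+1)) := by
      field_simp
      ring
    have eB : 1/(12*m^2) - 1/(12*(m+1)^2) = (2*m+1)/(12*m^2*(m+1)^2) := by
      field_simp
      ring
    have hkey := keyA m hm
    simp only [aseq, harmonic_cast_succ]
    push_cast
    rw [hlog]
    linarith

lemma bseq_lt_succ (n : ℕ) (hn : 2 ≤ n) : bseq n < bseq (n+1) := by
  set m : ℝ := (n : ℝ) with hmdef
  have hm : (2:ℝ) ≤ m := by rw [hmdef]; exact_mod_cast hn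
  have h0 : (0:ℝ) < m := by linarith
  have h1 : (0:ℝ) < m + 1 := by linarith
  have hlog : Real.log ((n:ℝ)+1) = Real.log m + Real.log (1 + 1/m) := by
    have := log_succ_sub n (by omega)
    push_cast at this
    linarith
  have hP : Real.log (1 + 1/m)
      ≤ 1/m - 1/(2*m^2) + 1/(3*m^3) - 1/(4*m^4) + 1/(5*m^5) - 1/(6*m^6) + 1/(7*m^7) - 1/(8*m^8) + 1/(9*m^9) - 1/(10*m^10) + 1/(11*m^11) := by
    have h := log_taylor_ub (1/m) (by positivity)
    have e : 1/m - 1/(2*m^2) + 1/(3*m^3) - 1/(4*m^4) + 1/(5*m^5) - 1/(6*m^6) + 1/(7*m^7) - 1/(8*m^8) + 1/(9*m^9) - 1/(10*m^10) + 1/(11*m^11)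
        = (1/m) - (1/m)^2/2 + (1/m)^3/3 - (1/m)^4/4 + (1/m)^5/5 - (1/m)^6/6 + (1/m)^7/7 - (1/m)^8/8 + (1/m)^9/9 - (1/m)^10/10 + (1/m)^11/11 := by
      ring
    rw [e]; exact h
  have eA : 1/(2*m) - 1/(2*(m+1)) = 1/(2*m*(m+1)) := by
    field_simp
    ring
  have eB : 1/(12*m^2) - 1/(12*(m+1)^2) = (2*m+1)/(12*m^2*(m+1)^2) := by
    field_simp
    ring
  have hkey := keyB m hm
  simp only [bseq, aseq, harmonic_cast_succ]
  push_cast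
  rw [hlog]
  linarith

lemma gamma_le_aseq (m : ℕ) (hm : 1 ≤ m) : Real.eulerMascheroniConstant ≤ aseq m := by
  apply le_of_tendsto aseq_tendsto
  filter_upwards [Filter.eventually_ge_atTop m] with j hj
  induction j, hj using Nat.le_induction with
  | base => exact le_refl _
  | succ j hj ih => exact le_trans (le_of_lt (aseq_succ_lt j (le_trans hm hj))) ih

lemma bseq_le_gamma (m : ℕ) (hm : 2 ≤ m) : bseq m ≤ Real.eulerMascheroniConstant := by
  apply ge_of_tendsto bseq_tendsto
  filter_upwards [Filter.eventually_ge_atTop m] with j hj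
  induction j, hj using Nat.le_induction with
  | base => exact le_refl _
  | succ j hj ih => exact le_trans ih (le_of_lt (bseq_lt_succ j (le_trans hm hj)))

lemma gamma_lt_aseq (k : ℕ) (hk : 1 ≤ k) : Real.eulerMascheroniConstant < aseq k :=
  lt_of_le_of_lt (gamma_le_aseq (k+1) (by omega)) (aseq_succ_lt k hk)

lemma bseq_lt_gamma (k : ℕ) (hk : 2 ≤ k) : bseq k < Real.eulerMascheroniConstant :=
  lt_of_lt_of_le (bseq_lt_succ k hk) (bseq_le_gamma (k+1) (by omega))

lemma sum_odd_eq (k : ℕ) : ∑ j ∈ Finset.Icc 1 k, (1:ℝ)/(2*(j:ℝ)-1)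
    = (harmonic (2*k) : ℝ) - (harmonic k : ℝ)/2 := by
  induction k with
  | zero => simp
  | succ k ih =>
    rw [Finset.sum_Icc_succ_top (by omega : 1 ≤ k+1), ih,
      show 2*(k+1) = (2*k+1)+1 from by ring, harmonic_cast_succ, harmonic_cast_succ,
      harmonic_cast_succ]
    push_cast
    have c1 : 2*((k:ℝ)+1)-1 = 2*(k:ℝ)+1 := by ring
    have c2 : 1/(2*(k:ℝ)+1+1) = (1/((k:ℝ)+1))/2 := by
      have h1 : ((k:ℝ)+1) ≠ 0 := by positivity
      rw [show 2*(k:ℝ)+1+1 = 2*((k:ℝ)+1) from by ring]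
      field_simp
    rw [c1, c2]
    ring

theorem odd_harmonic_upper_bound (k : ℕ) (hk : 1 ≤ k) :
    (∑ j ∈ Finset.Icc 1 k, (1 : ℝ) / (2 * (j : ℝ) - 1))
      < (Real.log (k : ℝ) + Real.log 4 + Real.eulerMascheroniConstant
          + 1 / (23 * (k : ℝ) ^ 2)) / 2 := by
  have hk1 : (1:ℝ) ≤ (k:ℝ) := by exact_mod_cast hk
  have hc0 : (0:ℝ) < (k:ℝ) := by linarith
  rw [sum_odd_eq]
  have hb := bseq_lt_gamma (2*k) (by omega)
  simp only [bseq, aseq] at hb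
  push_cast at hb
  rw [Real.log_mul (by norm_num) (ne_of_gt hc0)] at hb
  have ha := gamma_lt_aseq k hk
  simp only [aseq] at ha
  have hlog4 : Real.log 4 = 2 * Real.log 2 := by
    rw [show (4:ℝ) = 2^2 from by norm_num, Real.log_pow]
    norm_num
  have e1 : 1/(2*(2*(k:ℝ))) = (1/4) * (1/(k:ℝ)) := by ring
  have e2 : 1/(12*(2*(k:ℝ))^2) = (1/48) * (1/(k:ℝ)^2) := by ring
  have e3 : 1/(120*(2*(k:ℝ))^4) = (1/1920) * (1/(k:ℝ)^4) := by ring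
  have e4 : 1/(2*(k:ℝ)) = (1/2) * (1/(k:ℝ)) := by ring
  have e5 : 1/(12*(k:ℝ)^2) = (1/12) * (1/(k:ℝ)^2) := by ring
  have e6 : 1/(23*(k:ℝ)^2) = (1/23) * (1/(k:ℝ)^2) := by ring
  rw [e1, e2, e3] at hb
  rw [e4, e5] at ha
  rw [e6, hlog4]
  have h4 : (1:ℝ)/(k:ℝ)^4 ≤ 1/(k:ℝ)^2 := by
    apply one_div_le_one_div_of_le (by positivity)
    have hk2 : (1:ℝ) ≤ (k:ℝ)^2 := by nlinarith
    nlinarith [mul_le_mul_of_nonneg_left hk2 (by positivity : (0:ℝ) ≤ (k:ℝ)^2)]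
  have hpos : (0:ℝ) < 1/(k:ℝ)^2 := by positivity
  linarith
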